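/- Let V be a finite set, let A₁, A₂ ⊆ A with A₁ ∪ A₂ = A and A₁ ∩ A₂ = C, and let B₁ = {x¹,…,x^{d₁}} ⊆ {0,1}^{A₁}, B₂ = {y¹,…,y^{d₂}} ⊆ {0,1}^{A₂} be linearly independent sets such that for each a ∈ C, the sets I_a = {i : x^i_a = 1} and J_a = {j : y^j_a = 1} are nonempty, and every vector in B₁ and B₂ has exactly one 1-entry in C. For each a ∈ C with I_a = {i₁,…,i_k}, J_a = {j₁,…,j_ℓ}, form the vectors z^a_t = x^{i₁} ⊙ y^{j_t} (t = 1,…,ℓ) and z^a_{ℓ+t} = x^{i_{1+t}} ⊙ y^{j₁} (t = 1,…,k−1), where u ⊙ w ∈ ℝ^A agrees with u on A₁ \ A₂, with w on A₂ \ A₁, and with their common value on C. Then the resulting set B₁ ⊙ B₂ has exactly d₁ + d₂ − |C| elements and is linearly independent. -/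

import Mathlib

open scoped Classical

noncomputable section

/-- `glue A₁ u w` agrees with `u` on `A₁` and with `w` off `A₁` (the operation `u ⊙ w`). -/
def glue {A : Type*} [DecidableEq A] (A₁ : Finset A) (u w : A → ℝ) : A → ℝ :=
  fun b => if b ∈ A₁ then u b else w b

private lemma sum01_zero {A : Type*} {s : Finset A} {f : A → ℝ}
    (h01 : ∀ a, f a = 0 ∨ f a = 1) (hsum : ∑ a ∈ s, f a = 1)
    {a b : A} (ha : a ∈ s) (hfa : f a = 1) (hb : b ∈ s) (hba : b ≠ a) : f b = 0 := by
  rcases h01 b with h | h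
  · exact h
  exfalso
  classical
  have hsub : ({a, b} : Finset A) ⊆ s := by
    intro c hc
    simp only [Finset.mem_insert, Finset.mem_singleton] at hc
    rcases hc with rfl | rfl <;> assumption
  have h2 : ∑ c ∈ ({a, b} : Finset A), f c ≤ ∑ c ∈ s, f c :=
    Finset.sum_le_sum_of_subset_of_nonneg hsub (by
      intro c _ _
      rcases h01 c with h' | h' <;> simp [h'])
  rw [Finset.sum_pair (Ne.symm hba)] at h2
  rw [hsum, hfa, h] at h2
  linarith

private lemma sum01_exists {A : Type*} {s : Finset A} {f : A → ℝ}
    (h01 : ∀ a, f a = 0 ∨ f a = 1) (hsum : ∑ a ∈ s, f a = 1) :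
    ∃ a ∈ s, f a = 1 := by
  obtain ⟨a, ha, hne⟩ := Finset.exists_ne_zero_of_sum_ne_zero
    (show ∑ a ∈ s, f a ≠ 0 by rw [hsum]; norm_num)
  exact ⟨a, ha, (h01 a).resolve_left hne⟩


theorem stmt12 {A : Type*} [Fintype A] [DecidableEq A]
    (A₁ A₂ : Finset A) (hcover : A₁ ∪ A₂ = Finset.univ)
    (d₁ d₂ : ℕ) (x : Fin d₁ → A → ℝ) (y : Fin d₂ → A → ℝ)
    (hx01 : ∀ i a, x i a = 0 ∨ x i a = 1) (hy01 : ∀ j a, y j a = 0 ∨ y j a = 1)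
    (hxsupp : ∀ i a, a ∉ A₁ → x i a = 0) (hysupp : ∀ j a, a ∉ A₂ → y j a = 0)
    (hxli : LinearIndependent ℝ x) (hyli : LinearIndependent ℝ y)
    -- each vector has exactly one 1-entry in `C = A₁ ∩ A₂`
    (hxone : ∀ i, ∑ a ∈ A₁ ∩ A₂, x i a = 1) (hyone : ∀ j, ∑ a ∈ A₁ ∩ A₂, y j a = 1)
    -- distinguished elements `i₁ ∈ I_a`, `j₁ ∈ J_a` for each `a ∈ C`
    (i₀ : A → Fin d₁) (j₀ : A → Fin d₂)
    (hi₀ : ∀ a ∈ A₁ ∩ A₂, x (i₀ a) a = 1) (hj₀ : ∀ a ∈ A₁ ∩ A₂, y (j₀ a) a = 1) :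
    -- the composed family `B₁ ⊙ B₂`
    let S : Finset (A × Fin d₁ × Fin d₂) :=
      Finset.univ.filter (fun p => p.1 ∈ A₁ ∩ A₂ ∧ x p.2.1 p.1 = 1 ∧ y p.2.2 p.1 = 1 ∧
        (p.2.1 = i₀ p.1 ∨ p.2.2 = j₀ p.1))
    S.card = d₁ + d₂ - (A₁ ∩ A₂).card ∧
    LinearIndependent ℝ (fun p : {p // p ∈ S} => glue A₁ (x p.1.2.1) (y p.1.2.2)) := by
  intro S
  have hSdef : S = Finset.univ.filter (fun p : A × Fin d₁ × Fin d₂ =>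
      p.1 ∈ A₁ ∩ A₂ ∧ x p.2.1 p.1 = 1 ∧ y p.2.2 p.1 = 1 ∧
      (p.2.1 = i₀ p.1 ∨ p.2.2 = j₀ p.1)) := rfl
  have hmemS : ∀ p : A × Fin d₁ × Fin d₂, p ∈ S ↔
      (p.1 ∈ A₁ ∩ A₂ ∧ x p.2.1 p.1 = 1 ∧ y p.2.2 p.1 = 1 ∧
        (p.2.1 = i₀ p.1 ∨ p.2.2 = j₀ p.1)) := by
    intro p
    rw [hSdef, Finset.mem_filter]
    simp
  have hxz : ∀ i, ∀ a ∈ A₁ ∩ A₂, x i a = 1 → ∀ b ∈ A₁ ∩ A₂, b ≠ a → x i b = 0 :=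
    fun i a ha h1 b hb hba => sum01_zero (hx01 i) (hxone i) ha h1 hb hba
  have hyz : ∀ j, ∀ a ∈ A₁ ∩ A₂, y j a = 1 → ∀ b ∈ A₁ ∩ A₂, b ≠ a → y j b = 0 :=
    fun j a ha h1 b hb hba => sum01_zero (hy01 j) (hyone j) ha h1 hb hba
  have hxuniq : ∀ i, ∀ a ∈ A₁ ∩ A₂, x i a = 1 → ∀ b ∈ A₁ ∩ A₂, x i b = 1 → b = a := by
    intro i a ha h1 b hb h2
    by_contra hne
    have := hxz i a ha h1 b hb hne
    rw [h2] at this; norm_num at this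
  have hyuniq : ∀ j, ∀ a ∈ A₁ ∩ A₂, y j a = 1 → ∀ b ∈ A₁ ∩ A₂, y j b = 1 → b = a := by
    intro j a ha h1 b hb h2
    by_contra hne
    have := hyz j a ha h1 b hb hne
    rw [h2] at this; norm_num at this
  constructor
  · -- cardinality
    choose cy hcy1 hcy2 using fun j => sum01_exists (hy01 j) (hyone j)
    choose cx hcx1 hcx2 using fun i => sum01_exists (hx01 i) (hxone i)
    set S₁ := S.filter (fun p => p.2.1 = i₀ p.1) with hS₁
    set S₂ := S.filter (fun p => p.2.2 = j₀ p.1) with hS₂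
    have hU : S = S₁ ∪ S₂ := by
      ext p
      simp only [hS₁, hS₂, Finset.mem_union, Finset.mem_filter]
      constructor
      · intro hp
        rcases ((hmemS p).1 hp).2.2.2 with h | h
        · exact Or.inl ⟨hp, h⟩
        · exact Or.inr ⟨hp, h⟩
      · rintro (⟨hp, _⟩ | ⟨hp, _⟩) <;> exact hp
    have hcard1 : S₁.card = d₂ := by
      have h : S₁.card = (Finset.univ : Finset (Fin d₂)).card := by
        apply Finset.card_nbij' (i := fun p => p.2.2) (j := fun j => (cy j, i₀ (cy j), j))
        · intro p _; exact Finset.mem_univ _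
        · intro j _
          rw [hS₁, Finset.mem_coe, Finset.mem_filter]
          refine ⟨(hmemS _).2 ⟨hcy1 j, hi₀ _ (hcy1 j), hcy2 j, Or.inl rfl⟩, rfl⟩
        · intro p hp
          rw [hS₁, Finset.mem_coe, Finset.mem_filter] at hp
          obtain ⟨hpS, hpi⟩ := hp
          obtain ⟨ha, hx1, hy1, _⟩ := (hmemS p).1 hpS
          have h1 : p.1 = cy p.2.2 :=
            hyuniq p.2.2 (cy p.2.2) (hcy1 p.2.2) (hcy2 p.2.2) p.1 ha hy1
          exact Prod.ext h1.symm (Prod.ext (by rw [hpi, h1]) rfl)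
        · intro j _; rfl
      simpa using h
    have hcard2 : S₂.card = d₁ := by
      have h : S₂.card = (Finset.univ : Finset (Fin d₁)).card := by
        apply Finset.card_nbij' (i := fun p => p.2.1) (j := fun i => (cx i, i, j₀ (cx i)))
        · intro p _; exact Finset.mem_univ _
        · intro i _
          rw [hS₂, Finset.mem_coe, Finset.mem_filter]
          refine ⟨(hmemS _).2 ⟨hcx1 i, hcx2 i, hj₀ _ (hcx1 i), Or.inr rfl⟩, rfl⟩
        · intro p hp
          rw [hS₂, Finset.mem_coe, Finset.mem_filter] at hp
          obtain ⟨hpS, hpj⟩ := hp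
          obtain ⟨ha, hx1, hy1, _⟩ := (hmemS p).1 hpS
          have h1 : p.1 = cx p.2.1 :=
            hxuniq p.2.1 (cx p.2.1) (hcx1 p.2.1) (hcx2 p.2.1) p.1 ha hx1
          exact Prod.ext h1.symm (Prod.ext rfl (by rw [hpj, h1]))
        · intro i _; rfl
      simpa using h
    have hcard3 : (S₁ ∩ S₂).card = (A₁ ∩ A₂).card := by
      apply Finset.card_nbij' (i := fun p => p.1) (j := fun a => (a, i₀ a, j₀ a))
      · intro p hp
        rw [Finset.mem_coe, Finset.mem_inter, hS₁, Finset.mem_filter] at hp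
        exact ((hmemS _).1 hp.1.1).1
      · intro a ha
        have hmem : (a, i₀ a, j₀ a) ∈ S := (hmemS _).2 ⟨ha, hi₀ a ha, hj₀ a ha, Or.inl rfl⟩
        rw [Finset.mem_coe, Finset.mem_inter]
        constructor
        · rw [hS₁]; exact Finset.mem_filter.2 ⟨hmem, rfl⟩
        · rw [hS₂]; exact Finset.mem_filter.2 ⟨hmem, rfl⟩
      · intro p hp
        rw [Finset.mem_coe, Finset.mem_inter] at hp
        have h1 := (Finset.mem_filter.1 (hS₁ ▸ hp.1)).2
        have h2 := (Finset.mem_filter.1 (hS₂ ▸ hp.2)).2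
        exact Prod.ext rfl (Prod.ext h1.symm h2.symm)
      · intro a _; rfl
    have hUc := Finset.card_union_add_card_inter S₁ S₂
    rw [← hU, hcard1, hcard2, hcard3] at hUc
    omega
  · -- linear independence
    rw [Fintype.linearIndependent_iff]
    intro g hg q
    set l : A × Fin d₁ × Fin d₂ → ℝ := fun p => if h : p ∈ S then g ⟨p, h⟩ else 0 with hl
    have hl0 : ∀ p, p ∉ S → l p = 0 := by
      intro p hp; simp only [hl]; rw [dif_neg hp]
    have hlg : ∀ (p) (hp : p ∈ S), l p = g ⟨p, hp⟩ := by
      intro p hp; simp only [hl]; rw [dif_pos hp]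
    have hlS : ∀ p, l p ≠ 0 → p ∈ S := by
      intro p h; by_contra hp; exact h (hl0 p hp)
    have hsum0 : ∀ b, ∑ p : A × Fin d₁ × Fin d₂, l p * glue A₁ (x p.2.1) (y p.2.2) b = 0 := by
      intro b
      have h2 : ∑ q : {p // p ∈ S}, g q * glue A₁ (x q.1.2.1) (y q.1.2.2) b = 0 := by
        have := congrFun hg b
        simpa [Finset.sum_apply] using this
      calc ∑ p : A × Fin d₁ × Fin d₂, l p * glue A₁ (x p.2.1) (y p.2.2) b
          = ∑ p ∈ S, l p * glue A₁ (x p.2.1) (y p.2.2) b :=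
            (Finset.sum_subset (Finset.subset_univ S)
              (fun p _ hp => by rw [hl0 p hp, zero_mul])).symm
        _ = ∑ q : {p // p ∈ S}, l q.1 * glue A₁ (x q.1.2.1) (y q.1.2.2) b :=
            (Finset.sum_coe_sort S (fun p => l p * glue A₁ (x p.2.1) (y p.2.2) b)).symm
        _ = ∑ q : {p // p ∈ S}, g q * glue A₁ (x q.1.2.1) (y q.1.2.2) b := by
            apply Finset.sum_congr rfl
            intro q _
            rw [hlg q.1 q.2]
        _ = 0 := h2
    have hglue : ∀ p ∈ S, ∀ b, glue A₁ (x p.2.1) (y p.2.2) b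
        = x p.2.1 b + y p.2.2 b - (if p.1 = b then 1 else 0) := by
      intro p hp b
      obtain ⟨ha, hx1, hy1, _⟩ := (hmemS p).1 hp
      have haA1 : p.1 ∈ A₁ := (Finset.mem_inter.1 ha).1
      have haA2 : p.1 ∈ A₂ := (Finset.mem_inter.1 ha).2
      unfold glue
      by_cases hb : b ∈ A₁
      · rw [if_pos hb]
        by_cases hb2 : b ∈ A₂
        · have hbC : b ∈ A₁ ∩ A₂ := Finset.mem_inter.2 ⟨hb, hb2⟩
          by_cases hba : p.1 = b
          · subst hba; rw [hy1, if_pos rfl]; ring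
          · have h0 : y p.2.2 b = 0 :=
              hyz p.2.2 p.1 ha hy1 b hbC (fun h => hba h.symm)
            rw [h0, if_neg hba]; ring
        · have h0 : y p.2.2 b = 0 := hysupp _ _ hb2
          have hne : p.1 ≠ b := fun h => hb2 (h ▸ haA2)
          rw [h0, if_neg hne]; ring
      · have hb2 : b ∈ A₂ := by
          have hmem : b ∈ A₁ ∪ A₂ := by rw [hcover]; exact Finset.mem_univ b
          rcases Finset.mem_union.1 hmem with h | h
          · exact absurd h hb
          · exact h
        rw [if_neg hb]
        have h0 : x p.2.1 b = 0 := hxsupp _ _ hb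
        have hne : p.1 ≠ b := fun h => hb (h ▸ haA1)
        rw [h0, if_neg hne]; ring
    have hxval : ∀ p ∈ S, ∀ b ∈ A₁ ∩ A₂, x p.2.1 b = if p.1 = b then 1 else 0 := by
      intro p hp b hb
      obtain ⟨ha, hx1, hy1, _⟩ := (hmemS p).1 hp
      by_cases h : p.1 = b
      · rw [if_pos h, ← h, hx1]
      · rw [if_neg h]; exact hxz p.2.1 p.1 ha hx1 b hb (fun hh => h hh.symm)
    have hyval : ∀ p ∈ S, ∀ b ∈ A₁ ∩ A₂, y p.2.2 b = if p.1 = b then 1 else 0 := by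
      intro p hp b hb
      obtain ⟨ha, hx1, hy1, _⟩ := (hmemS p).1 hp
      by_cases h : p.1 = b
      · rw [if_pos h, ← h, hy1]
      · rw [if_neg h]; exact hyz p.2.2 p.1 ha hy1 b hb (fun hh => h hh.symm)
    set μ : Fin d₁ → ℝ :=
      fun i => ∑ p : A × Fin d₁ × Fin d₂, if p.2.1 = i then l p else 0 with hμ
    set ν : Fin d₂ → ℝ :=
      fun j => ∑ p : A × Fin d₁ × Fin d₂, if p.2.2 = j then l p else 0 with hν
    set σ : A → ℝ :=
      fun a => ∑ p : A × Fin d₁ × Fin d₂, if p.1 = a then l p else 0 with hσ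
    have hσ0 : ∀ a, σ a = 0 := by
      intro a
      by_cases haC : a ∈ A₁ ∩ A₂
      · have heq : ∀ p : A × Fin d₁ × Fin d₂,
            (if p.1 = a then l p else 0) = l p * glue A₁ (x p.2.1) (y p.2.2) a := by
          intro p
          by_cases hp : p ∈ S
          · rw [hglue p hp a, hxval p hp a haC, hyval p hp a haC]
            by_cases h : p.1 = a <;> simp [h]
          · simp [hl0 p hp]
        calc σ a = ∑ p : A × Fin d₁ × Fin d₂, l p * glue A₁ (x p.2.1) (y p.2.2) a := by
              rw [hσ]; exact Finset.sum_congr rfl (fun p _ => heq p)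
          _ = 0 := hsum0 a
      · rw [hσ]
        apply Finset.sum_eq_zero
        intro p _
        by_cases h : p.1 = a
        · rw [if_pos h]
          by_contra hne
          exact haC (h ▸ ((hmemS p).1 (hlS p hne)).1)
        · rw [if_neg h]
    have hgroupx : ∀ b, ∑ i, μ i * x i b
        = ∑ p : A × Fin d₁ × Fin d₂, l p * x p.2.1 b := by
      intro b
      simp only [hμ, Finset.sum_mul, ite_mul, zero_mul]
      rw [Finset.sum_comm]
      apply Finset.sum_congr rfl
      intro p _
      rw [Finset.sum_ite_eq]
      simp
    have hgroupy : ∀ b, ∑ j, ν j * y j b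
        = ∑ p : A × Fin d₁ × Fin d₂, l p * y p.2.2 b := by
      intro b
      simp only [hν, Finset.sum_mul, ite_mul, zero_mul]
      rw [Finset.sum_comm]
      apply Finset.sum_congr rfl
      intro p _
      rw [Finset.sum_ite_eq]
      simp
    have hmain : ∀ b, (∑ i, μ i * x i b) + (∑ j, ν j * y j b) = 0 := by
      intro b
      rw [hgroupx b, hgroupy b]
      have heq : ∀ p : A × Fin d₁ × Fin d₂,
          l p * x p.2.1 b + l p * y p.2.2 b
            = l p * glue A₁ (x p.2.1) (y p.2.2) b + (if p.1 = b then l p else 0) := by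
        intro p
        by_cases hp : p ∈ S
        · rw [hglue p hp b]
          by_cases h : p.1 = b <;> simp [h] <;> ring
        · simp [hl0 p hp]
      calc (∑ p : A × Fin d₁ × Fin d₂, l p * x p.2.1 b)
            + ∑ p : A × Fin d₁ × Fin d₂, l p * y p.2.2 b
          = ∑ p : A × Fin d₁ × Fin d₂, (l p * x p.2.1 b + l p * y p.2.2 b) :=
            Finset.sum_add_distrib.symm
        _ = ∑ p : A × Fin d₁ × Fin d₂,
              (l p * glue A₁ (x p.2.1) (y p.2.2) b + (if p.1 = b then l p else 0)) :=
            Finset.sum_congr rfl (fun p _ => heq p)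
        _ = (∑ p : A × Fin d₁ × Fin d₂, l p * glue A₁ (x p.2.1) (y p.2.2) b) + σ b := by
            rw [Finset.sum_add_distrib, hσ]
        _ = 0 := by rw [hsum0 b, hσ0 b]; ring
    have hFx : ∀ b, ∑ i, μ i * x i b = 0 := by
      intro b
      by_cases hb1 : b ∈ A₁
      · by_cases hb2 : b ∈ A₂
        · have hbC : b ∈ A₁ ∩ A₂ := Finset.mem_inter.2 ⟨hb1, hb2⟩
          rw [hgroupx b]
          have heq : ∀ p : A × Fin d₁ × Fin d₂,
              l p * x p.2.1 b = if p.1 = b then l p else 0 := by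
            intro p
            by_cases hp : p ∈ S
            · rw [hxval p hp b hbC]
              by_cases h : p.1 = b <;> simp [h]
            · simp [hl0 p hp]
          rw [Finset.sum_congr rfl (fun p _ => heq p)]
          have := hσ0 b
          rw [hσ] at this
          exact this
        · have h0 : ∑ j, ν j * y j b = 0 :=
            Finset.sum_eq_zero (fun j _ => by rw [hysupp j b hb2]; ring)
          have := hmain b
          rw [h0] at this
          linarith
      · exact Finset.sum_eq_zero (fun i _ => by rw [hxsupp i b hb1]; ring)
    have hFy : ∀ b, ∑ j, ν j * y j b = 0 := by
      intro b
      by_cases hb2 : b ∈ A₂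
      · by_cases hb1 : b ∈ A₁
        · have hbC : b ∈ A₁ ∩ A₂ := Finset.mem_inter.2 ⟨hb1, hb2⟩
          rw [hgroupy b]
          have heq : ∀ p : A × Fin d₁ × Fin d₂,
              l p * y p.2.2 b = if p.1 = b then l p else 0 := by
            intro p
            by_cases hp : p ∈ S
            · rw [hyval p hp b hbC]
              by_cases h : p.1 = b <;> simp [h]
            · simp [hl0 p hp]
          rw [Finset.sum_congr rfl (fun p _ => heq p)]
          have := hσ0 b
          rw [hσ] at this
          exact this
        · have h0 : ∑ i, μ i * x i b = 0 :=
            Finset.sum_eq_zero (fun i _ => by rw [hxsupp i b hb1]; ring)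
          have := hmain b
          rw [h0] at this
          linarith
      · exact Finset.sum_eq_zero (fun j _ => by rw [hysupp j b hb2]; ring)
    have hXsum : ∑ i, μ i • x i = 0 := by
      funext b
      simp only [Finset.sum_apply, Pi.smul_apply, smul_eq_mul, Pi.zero_apply]
      exact hFx b
    have hμ0 := Fintype.linearIndependent_iff.1 hxli μ hXsum
    have hYsum : ∑ j, ν j • y j = 0 := by
      funext b
      simp only [Finset.sum_apply, Pi.smul_apply, smul_eq_mul, Pi.zero_apply]
      exact hFy b
    have hν0 := Fintype.linearIndependent_iff.1 hyli ν hYsum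
    -- three elimination steps
    have hL1 : ∀ p ∈ S, p.2.1 ≠ i₀ p.1 → l p = 0 := by
      intro p hp hne
      obtain ⟨ha, hx1, hy1, hor⟩ := (hmemS p).1 hp
      have hj : p.2.2 = j₀ p.1 := hor.resolve_left hne
      have hμl : μ p.2.1 = l p := by
        have hdef : μ p.2.1 = ∑ p' : A × Fin d₁ × Fin d₂,
            if p'.2.1 = p.2.1 then l p' else 0 := rfl
        have hz : ∀ q ∈ (Finset.univ : Finset (A × Fin d₁ × Fin d₂)), q ≠ p →
            (if q.2.1 = p.2.1 then l q else 0) = 0 := by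
          intro q _ hqp
          by_cases hq1 : q.2.1 = p.2.1
          · rw [if_pos hq1]
            by_contra hlq
            have hqS := hlS q hlq
            obtain ⟨ha', hx1', hy1', hor'⟩ := (hmemS q).1 hqS
            have hq1' : q.1 = p.1 := by
              rw [hq1] at hx1'
              exact hxuniq p.2.1 p.1 ha hx1 q.1 ha' hx1'
            have hq2 : q.2.2 = j₀ q.1 := by
              refine hor'.resolve_left ?_
              rw [hq1, hq1']; exact hne
            exact hqp (Prod.ext hq1' (Prod.ext hq1 (by rw [hq2, hq1', ← hj])))
          · rw [if_neg hq1]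
        rw [hdef, Finset.sum_eq_single_of_mem p (Finset.mem_univ p) hz, if_pos rfl]
      rw [← hμl]; exact hμ0 p.2.1
    have hL2 : ∀ p ∈ S, p.2.2 ≠ j₀ p.1 → l p = 0 := by
      intro p hp hne
      obtain ⟨ha, hx1, hy1, hor⟩ := (hmemS p).1 hp
      have hi : p.2.1 = i₀ p.1 := hor.resolve_right hne
      have hνl : ν p.2.2 = l p := by
        have hdef : ν p.2.2 = ∑ p' : A × Fin d₁ × Fin d₂,
            if p'.2.2 = p.2.2 then l p' else 0 := rfl
        have hz : ∀ q ∈ (Finset.univ : Finset (A × Fin d₁ × Fin d₂)), q ≠ p →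
            (if q.2.2 = p.2.2 then l q else 0) = 0 := by
          intro q _ hqp
          by_cases hq2 : q.2.2 = p.2.2
          · rw [if_pos hq2]
            by_contra hlq
            have hqS := hlS q hlq
            obtain ⟨ha', hx1', hy1', hor'⟩ := (hmemS q).1 hqS
            have hq1' : q.1 = p.1 := by
              rw [hq2] at hy1'
              exact hyuniq p.2.2 p.1 ha hy1 q.1 ha' hy1'
            have hq1 : q.2.1 = i₀ q.1 := by
              refine hor'.resolve_right ?_
              rw [hq2, hq1']; exact hne
            exact hqp (Prod.ext hq1' (Prod.ext (by rw [hq1, hq1', ← hi]) hq2))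
          · rw [if_neg hq2]
        rw [hdef, Finset.sum_eq_single_of_mem p (Finset.mem_univ p) hz, if_pos rfl]
      rw [← hνl]; exact hν0 p.2.2
    have hLall : ∀ p ∈ S, l p = 0 := by
      intro p hp
      by_cases h1 : p.2.1 = i₀ p.1
      · by_cases h2 : p.2.2 = j₀ p.1
        · have hσl : σ p.1 = l p := by
            have hdef : σ p.1 = ∑ p' : A × Fin d₁ × Fin d₂,
                if p'.1 = p.1 then l p' else 0 := rfl
            have hz : ∀ q ∈ (Finset.univ : Finset (A × Fin d₁ × Fin d₂)), q ≠ p →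
                (if q.1 = p.1 then l q else 0) = 0 := by
              intro q _ hqp
              by_cases hq : q.1 = p.1
              · rw [if_pos hq]
                by_contra hlq
                have hqS := hlS q hlq
                by_cases hq1 : q.2.1 = i₀ q.1
                · by_cases hq2 : q.2.2 = j₀ q.1
                  · exact hqp (Prod.ext hq (Prod.ext
                      (by rw [hq1, hq, ← h1]) (by rw [hq2, hq, ← h2])))
                  · exact hlq (hL2 q hqS hq2)
                · exact hlq (hL1 q hqS hq1)
              · rw [if_neg hq]
            rw [hdef, Finset.sum_eq_single_of_mem p (Finset.mem_univ p) hz, if_pos rfl]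
          rw [← hσl]; exact hσ0 p.1
        · exact hL2 p hp h2
      · exact hL1 p hp h1
    have := hLall q.1 q.2
    rwa [hlg q.1 q.2] at this
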